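/- Let s ∈ (-1/2, 1/2), Z ≥ 1. Suppose (φ_k)_{k≥1} are complex numbers with |φ_k| ≤ Σ_{l≥1} (|c_l|/l)[1/k + k/((k+l)(|k-l|+1))] for a sequence (c_l) with Σ_l (1+l²+Z²)^s |c_l|² < ∞. Then Σ_k (1+k²+Z²)^s |φ_k|² ≤ C Σ_l (1+l²+Z²)^s |c_l|² with C depending only on s (not on Z). -/

import Mathlib

open Real

noncomputable section

namespace Stmt17

/-- shifted zeta-type sum -/
def ZS (p : ℝ) : ℝ := ∑' j : ℕ, ((j : ℝ) + 1) ^ (-p)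

lemma one_le_cast_succ (j : ℕ) : (1:ℝ) ≤ (j:ℝ) + 1 := by
  have : (0:ℝ) ≤ (j:ℝ) := Nat.cast_nonneg j
  linarith

lemma summable_zs {p : ℝ} (hp : 1 < p) :
    Summable (fun j : ℕ => ((j:ℝ) + 1) ^ (-p)) := by
  have h : Summable (fun n : ℕ => (n:ℝ) ^ (-p)) :=
    Real.summable_nat_rpow.mpr (by linarith)
  have h2 := (summable_nat_add_iff (f := fun n : ℕ => (n:ℝ) ^ (-p)) 1).mpr h
  exact h2.congr (fun n => by push_cast; ring_nf)

lemma zs_nonneg (p : ℝ) : 0 ≤ ZS p :=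
  tsum_nonneg fun j => Real.rpow_nonneg (by positivity) _

lemma zs_eq {p : ℝ} : ∑' j : ℕ, ((j : ℝ) + 1) ^ (-p) = ZS p := rfl

/-- the kernel -/
def Kr (k l : ℝ) : ℝ := 1/l * (1/k + k/((k+l)*(|k-l|+1)))

def rho (k l : ℝ) : ℝ := max k l / min k l

def Kp (t k l : ℝ) : ℝ := rho k l ^ t * Kr k l

lemma rho_comm (k l : ℝ) : rho k l = rho l k := by
  unfold rho; rw [max_comm, min_comm]

lemma one_le_rho {k l : ℝ} (hk : 1 ≤ k) (hl : 1 ≤ l) : 1 ≤ rho k l := by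
  unfold rho
  have hmin : 0 < min k l := lt_min (by linarith) (by linarith)
  rw [le_div_iff₀ hmin, one_mul]
  exact min_le_max

lemma rho_nonneg {k l : ℝ} (hk : 1 ≤ k) (hl : 1 ≤ l) : 0 ≤ rho k l :=
  le_trans zero_le_one (one_le_rho hk hl)

lemma frac_nonneg {k l : ℝ} (hk : 1 ≤ k) (hl : 1 ≤ l) :
    0 ≤ k/((k+l)*(|k-l|+1)) := by
  apply div_nonneg (by linarith)
  apply mul_nonneg (by linarith)
  have := abs_nonneg (k - l); linarith

lemma Kr_nonneg {k l : ℝ} (hk : 1 ≤ k) (hl : 1 ≤ l) : 0 ≤ Kr k l := by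
  unfold Kr
  apply mul_nonneg (by positivity)
  exact add_nonneg (by positivity) (frac_nonneg hk hl)

lemma Kp_nonneg {t k l : ℝ} (hk : 1 ≤ k) (hl : 1 ≤ l) : 0 ≤ Kp t k l :=
  mul_nonneg (Real.rpow_nonneg (rho_nonneg hk hl) t) (Kr_nonneg hk hl)

lemma frac_le_one {k l : ℝ} (hk : 1 ≤ k) (hl : 1 ≤ l) :
    k/((k+l)*(|k-l|+1)) ≤ 1 := by
  apply div_le_one_of_le₀
  · nlinarith [abs_nonneg (k - l)]
  · nlinarith [abs_nonneg (k - l)]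

lemma rpow_merge {x : ℝ} (hx : 0 < x) {a b c : ℝ} (h : a + b = c) :
    x ^ a * x ^ b = x ^ c := by rw [← Real.rpow_add hx, h]

/-- ρ^t ≤ (k/l)^t + (l/k)^t -/
lemma rho_rpow_le {t k l : ℝ} (hk : 1 ≤ k) (hl : 1 ≤ l) :
    rho k l ^ t ≤ (k/l) ^ t + (l/k) ^ t := by
  have hk0 : (0:ℝ) < k := by linarith
  have hl0 : (0:ℝ) < l := by linarith
  rcases le_total k l with h | h
  · have hρ : rho k l = l / k := by unfold rho; rw [max_eq_right h, min_eq_left h]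
    rw [hρ]
    have : (0:ℝ) ≤ (k/l)^t := Real.rpow_nonneg (by positivity) t
    linarith
  · have hρ : rho k l = k / l := by unfold rho; rw [max_eq_left h, min_eq_right h]
    rw [hρ]
    have : (0:ℝ) ≤ (l/k)^t := Real.rpow_nonneg (by positivity) t
    linarith

/-- part-1 estimate (used for rows and columns) -/
lemma part1_bound {t k l : ℝ} (ht0 : 0 ≤ t) (hk : 1 ≤ k) (hl : 1 ≤ l) :
    rho k l ^ t * (1/l * (1/k)) * l ^ (-(1/2):ℝ)
      ≤ k ^ (t-1) * l ^ (-(3/2+t)) + k ^ (-(1+t)) * l ^ (-(3/2-t)) := by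
  have hk0 : (0:ℝ) < k := by linarith
  have hl0 : (0:ℝ) < l := by linarith
  have h1 : rho k l ^ t * (1/l * (1/k)) * l ^ (-(1/2):ℝ)
      ≤ ((k/l) ^ t + (l/k) ^ t) * (1/l * (1/k)) * l ^ (-(1/2):ℝ) := by
    apply mul_le_mul_of_nonneg_right _ (Real.rpow_nonneg hl0.le _)
    apply mul_le_mul_of_nonneg_right (rho_rpow_le hk hl) (by positivity)

  refine h1.trans (le_of_eq ?_)
  rw [Real.div_rpow hk0.le hl0.le, Real.div_rpow hl0.le hk0.le]
  have e1 : k ^ (t-1) = k ^ t * k ^ (-1:ℝ) := (rpow_merge hk0 (by ring)).symm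
  have e2 : l ^ (-t) * l ^ (-(1/2):ℝ) * l ^ (-1:ℝ) = l ^ (-(3/2+t)) := by
    rw [rpow_merge hl0 (show -t + -(1/2) = (-(1/2)-t:ℝ) by ring),
      rpow_merge hl0 (show (-(1/2)-t:ℝ) + -1 = -(3/2+t) by ring)]
  have e3 : k ^ (-(1+t)) = k ^ (-t) * k ^ (-1:ℝ) := (rpow_merge hk0 (by ring)).symm
  have e4 : l ^ t * l ^ (-(1/2):ℝ) * l ^ (-1:ℝ) = l ^ (-(3/2-t)) := by
    rw [rpow_merge hl0 (show t + -(1/2) = (t-1/2:ℝ) by ring),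
      rpow_merge hl0 (show (t-1/2:ℝ) + -1 = -(3/2-t) by ring)]
  rw [e1, e3, ← e2, ← e4, Real.rpow_neg hl0.le t, Real.rpow_neg hk0.le t,
    Real.rpow_neg_one, Real.rpow_neg_one]
  ring

lemma rpow_expand2 {x : ℝ} (hx : 0 < x) {a : ℝ} (b c : ℝ) (h : a = b + c) :
    x ^ a = x ^ b * x ^ c := by rw [h, Real.rpow_add hx]

lemma rpow_expand3 {x : ℝ} (hx : 0 < x) {a : ℝ} (b c d : ℝ) (h : a = b + c + d) :
    x ^ a = x ^ b * x ^ c * x ^ d := by rw [h, Real.rpow_add hx, Real.rpow_add hx]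

/-- row estimate, far-left region 2l ≤ k -/
lemma rowFarLeft {t k l : ℝ} (ht0 : 0 ≤ t) (hl : 1 ≤ l) (h2l : 2*l ≤ k) :
    rho k l ^ t * (1/l * (k/((k+l)*(|k-l|+1)))) * l ^ (-(1/2):ℝ)
      ≤ 2 * k ^ (t-1) * l ^ (-(3/2+t)) := by
  have hl0 : (0:ℝ) < l := by linarith
  have hk0 : (0:ℝ) < k := by linarith
  have hlk : l ≤ k := by linarith
  have habs : |k - l| = k - l := abs_of_nonneg (by linarith)
  have hρ : rho k l = k/l := by unfold rho; rw [max_eq_left hlk, min_eq_right hlk]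
  have hfrac : k/((k+l)*(|k-l|+1)) ≤ 2/k := by
    rw [habs, div_le_div_iff₀ (by nlinarith) hk0]
    nlinarith
  have h1 : rho k l ^ t * (1/l * (k/((k+l)*(|k-l|+1)))) * l ^ (-(1/2):ℝ)
      ≤ (k/l) ^ t * (1/l * (2/k)) * l ^ (-(1/2):ℝ) := by
    rw [hρ]
    apply mul_le_mul_of_nonneg_right _ (Real.rpow_nonneg hl0.le _)
    apply mul_le_mul_of_nonneg_left _ (Real.rpow_nonneg (by positivity) t)
    exact mul_le_mul_of_nonneg_left hfrac (by positivity)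
  refine h1.trans (le_of_eq ?_)
  rw [Real.div_rpow hk0.le hl0.le,
    rpow_expand2 hk0 (a := t-1) t (-(1:ℝ)) (by ring),
    rpow_expand3 hl0 (a := -(3/2+t)) (-t) (-(1:ℝ)) (-(1/2)) (by ring),
    Real.rpow_neg hl0.le t, Real.rpow_neg_one, Real.rpow_neg_one]
  ring

/-- row estimate, near region -/
lemma rowNear {t k l : ℝ} (ht0 : 0 ≤ t) (ht : t ≤ 1/2) (hk : 1 ≤ k) (hl : 1 ≤ l)
    (h1 : k < 2*l) (h2 : l < 2*k) :
    rho k l ^ t * (1/l * (k/((k+l)*(|k-l|+1)))) * l ^ (-(1/2):ℝ)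
      ≤ 8 * k ^ (-(3/2):ℝ) := by
  have hl0 : (0:ℝ) < l := by linarith
  have hk0 : (0:ℝ) < k := by linarith
  have hρ2 : rho k l ≤ 2 := by
    unfold rho
    rcases le_total k l with h | h
    · rw [max_eq_right h, min_eq_left h, div_le_iff₀ hk0]; linarith
    · rw [max_eq_left h, min_eq_right h, div_le_iff₀ hl0]; linarith
  have hρt : rho k l ^ t ≤ 2 := by
    calc rho k l ^ t ≤ (2:ℝ) ^ t := Real.rpow_le_rpow (rho_nonneg hk hl) hρ2 ht0
      _ ≤ (2:ℝ) ^ (1:ℝ) := Real.rpow_le_rpow_of_exponent_le one_le_two (by linarith)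
      _ = 2 := Real.rpow_one 2
  have hfrac := frac_le_one hk hl
  have h1l : 1/l ≤ 2 * k ^ (-1:ℝ) := by
    rw [Real.rpow_neg_one, ← div_eq_mul_inv, div_le_div_iff₀ hl0 hk0]
    linarith
  have hl2 : l ^ (-(1/2):ℝ) ≤ 2 * k ^ (-(1/2):ℝ) := by
    have hkl : k/2 ≤ l := by linarith
    calc l ^ (-(1/2):ℝ) ≤ (k/2) ^ (-(1/2):ℝ) :=
          Real.rpow_le_rpow_of_nonpos (by linarith) hkl (by norm_num)
      _ = 2 ^ ((1/2):ℝ) * k ^ (-(1/2):ℝ) := by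
          rw [Real.div_rpow hk0.le (by norm_num),
            Real.rpow_neg (by norm_num : (0:ℝ) ≤ 2) (1/2), div_eq_mul_inv, inv_inv,
            mul_comm]
      _ ≤ 2 * k ^ (-(1/2):ℝ) := by
          apply mul_le_mul_of_nonneg_right _ (Real.rpow_nonneg hk0.le _)
          calc (2:ℝ) ^ ((1/2):ℝ) ≤ (2:ℝ) ^ (1:ℝ) :=
                Real.rpow_le_rpow_of_exponent_le one_le_two (by norm_num)
            _ = 2 := Real.rpow_one 2
  have key : rho k l ^ t * (1/l * (k/((k+l)*(|k-l|+1)))) * l ^ (-(1/2):ℝ)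
      ≤ 2 * (2 * k ^ (-1:ℝ) * 1) * (2 * k ^ (-(1/2):ℝ)) := by
    apply mul_le_mul
    · apply mul_le_mul hρt
      · exact mul_le_mul h1l hfrac (frac_nonneg hk hl) (by positivity)
      · exact mul_nonneg (by positivity) (frac_nonneg hk hl)
      · norm_num
    · exact hl2
    · exact Real.rpow_nonneg hl0.le _
    · positivity
  refine key.trans (le_of_eq ?_)
  have e1 : k ^ (-1:ℝ) * k ^ (-(1/2):ℝ) = k ^ (-(3/2):ℝ) :=
    rpow_merge hk0 (by norm_num)
  rw [← e1]; ring

/-- row estimate, far-right region 2k ≤ l -/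
lemma rowFarRight {t k l : ℝ} (ht0 : 0 ≤ t) (ht : t ≤ 1/2) (hk : 1 ≤ k) (h2k : 2*k ≤ l) :
    rho k l ^ t * (1/l * (k/((k+l)*(|k-l|+1)))) * l ^ (-(1/2):ℝ)
      ≤ 2 * k ^ (-1:ℝ) * l ^ (-(3/2):ℝ) := by
  have hk0 : (0:ℝ) < k := by linarith
  have hl0 : (0:ℝ) < l := by linarith
  have hl : (1:ℝ) ≤ l := by linarith
  have hkl : k ≤ l := by linarith
  have habs : |k - l| = l - k := by rw [abs_sub_comm]; exact abs_of_nonneg (by linarith)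
  have hρ : rho k l = l/k := by unfold rho; rw [max_eq_right hkl, min_eq_left hkl]
  have hfrac : k/((k+l)*(|k-l|+1)) ≤ 2*k/(l*l) := by
    rw [habs, div_le_div_iff₀ (by nlinarith) (by nlinarith)]
    have hmm : l*(l/2) ≤ (k+l)*(l-k+1) :=
      mul_le_mul (by linarith) (by linarith) (by linarith) (by linarith)
    nlinarith [hmm, hk0.le]
  have h1 : rho k l ^ t * (1/l * (k/((k+l)*(|k-l|+1)))) * l ^ (-(1/2):ℝ)
      ≤ (l/k) ^ t * (1/l * (2*k/(l*l))) * l ^ (-(1/2):ℝ) := by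
    rw [hρ]
    apply mul_le_mul_of_nonneg_right _ (Real.rpow_nonneg hl0.le _)
    apply mul_le_mul_of_nonneg_left _ (Real.rpow_nonneg (by positivity) t)
    exact mul_le_mul_of_nonneg_left hfrac (by positivity)
  have h2 : (l/k) ^ t * (1/l * (2*k/(l*l))) * l ^ (-(1/2):ℝ)
      = 2 * (k ^ (1-t) * l ^ (t-2)) * l ^ (-(3/2):ℝ) := by
    rw [Real.div_rpow hl0.le hk0.le,
      rpow_expand2 hk0 (a := 1-t) (1:ℝ) (-t) (by ring),
      rpow_expand3 hl0 (a := t-2) t (-(1:ℝ)) (-(1:ℝ)) (by ring),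
      rpow_expand2 hl0 (a := -(3/2)) (-(1:ℝ)) (-(1/2)) (by norm_num),
      Real.rpow_neg hk0.le t, Real.rpow_neg_one, Real.rpow_one]
    ring
  have h3 : 2 * (k ^ (1-t) * l ^ (t-2)) * l ^ (-(3/2):ℝ)
      ≤ 2 * (k ^ (1-t) * k ^ (t-2)) * l ^ (-(3/2):ℝ) := by
    apply mul_le_mul_of_nonneg_right _ (Real.rpow_nonneg hl0.le _)
    apply mul_le_mul_of_nonneg_left _ (by norm_num)
    exact mul_le_mul_of_nonneg_left
      (Real.rpow_le_rpow_of_nonpos hk0 hkl (by linarith)) (Real.rpow_nonneg hk0.le _)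
  have h4 : 2 * (k ^ (1-t) * k ^ (t-2)) * l ^ (-(3/2):ℝ)
      = 2 * k ^ (-1:ℝ) * l ^ (-(3/2):ℝ) := by
    rw [rpow_merge hk0 (show (1-t) + (t-2) = (-1:ℝ) by ring)]
  rw [← h4]
  exact h1.trans (le_of_eq h2 |>.trans h3)

/-- column estimate, region 2k ≤ l (small row index) -/
lemma colFarLeft {t k l : ℝ} (ht0 : 0 ≤ t) (ht : t ≤ 1/2) (hk : 1 ≤ k) (h2k : 2*k ≤ l) :
    rho k l ^ t * (1/l * (k/((k+l)*(|k-l|+1)))) * k ^ (-(1/2):ℝ)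
      ≤ 2 * l ^ (-(5/2):ℝ) := by
  have hk0 : (0:ℝ) < k := by linarith
  have hl0 : (0:ℝ) < l := by linarith
  have hl : (1:ℝ) ≤ l := by linarith
  have hkl : k ≤ l := by linarith
  have habs : |k - l| = l - k := by rw [abs_sub_comm]; exact abs_of_nonneg (by linarith)
  have hρ : rho k l = l/k := by unfold rho; rw [max_eq_right hkl, min_eq_left hkl]
  have hfrac : k/((k+l)*(|k-l|+1)) ≤ 2*k/(l*l) := by
    rw [habs, div_le_div_iff₀ (by nlinarith) (by nlinarith)]
    have hmm : l*(l/2) ≤ (k+l)*(l-k+1) :=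
      mul_le_mul (by linarith) (by linarith) (by linarith) (by linarith)
    nlinarith [hmm, hk0.le]
  have h1 : rho k l ^ t * (1/l * (k/((k+l)*(|k-l|+1)))) * k ^ (-(1/2):ℝ)
      ≤ (l/k) ^ t * (1/l * (2*k/(l*l))) * k ^ (-(1/2):ℝ) := by
    rw [hρ]
    apply mul_le_mul_of_nonneg_right _ (Real.rpow_nonneg hk0.le _)
    apply mul_le_mul_of_nonneg_left _ (Real.rpow_nonneg (by positivity) t)
    exact mul_le_mul_of_nonneg_left hfrac (by positivity)
  have h2 : (l/k) ^ t * (1/l * (2*k/(l*l))) * k ^ (-(1/2):ℝ)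
      = 2 * l ^ (t-3) * k ^ (1/2-t) := by
    rw [Real.div_rpow hl0.le hk0.le,
      rpow_expand3 hk0 (a := 1/2-t) (-t) (1:ℝ) (-(1/2)) (by ring),
      rpow_expand3 hl0 (a := t-3) t (-(1:ℝ)) (-(2:ℝ)) (by ring),
      rpow_expand2 hl0 (a := -(2:ℝ)) (-(1:ℝ)) (-(1:ℝ)) (by norm_num),
      Real.rpow_neg hk0.le t, Real.rpow_neg_one, Real.rpow_one]
    ring
  have h3 : 2 * l ^ (t-3) * k ^ (1/2-t) ≤ 2 * l ^ (t-3) * l ^ (1/2-t) := by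
    apply mul_le_mul_of_nonneg_left
      (Real.rpow_le_rpow hk0.le hkl (by linarith))
      (mul_nonneg (by norm_num) (Real.rpow_nonneg hl0.le _))
  have h4 : 2 * l ^ (t-3) * l ^ (1/2-t) = 2 * l ^ (-(5/2):ℝ) := by
    rw [mul_assoc, rpow_merge hl0 (show (t-3) + (1/2-t) = (-(5/2):ℝ) by ring)]
  rw [← h4]
  exact h1.trans (le_of_eq h2 |>.trans h3)

/-- column estimate, near region -/
lemma colNear {t k l : ℝ} (ht0 : 0 ≤ t) (ht : t ≤ 1/2) (hk : 1 ≤ k) (hl : 1 ≤ l)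
    (h1 : k < 2*l) (h2 : l < 2*k) :
    rho k l ^ t * (1/l * (k/((k+l)*(|k-l|+1)))) * k ^ (-(1/2):ℝ)
      ≤ 4 * l ^ (-(3/2):ℝ) := by
  have hl0 : (0:ℝ) < l := by linarith
  have hk0 : (0:ℝ) < k := by linarith
  have hρ2 : rho k l ≤ 2 := by
    unfold rho
    rcases le_total k l with h | h
    · rw [max_eq_right h, min_eq_left h, div_le_iff₀ hk0]; linarith
    · rw [max_eq_left h, min_eq_right h, div_le_iff₀ hl0]; linarith
  have hρt : rho k l ^ t ≤ 2 := by
    calc rho k l ^ t ≤ (2:ℝ) ^ t := Real.rpow_le_rpow (rho_nonneg hk hl) hρ2 ht0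
      _ ≤ (2:ℝ) ^ (1:ℝ) := Real.rpow_le_rpow_of_exponent_le one_le_two (by linarith)
      _ = 2 := Real.rpow_one 2
  have hfrac := frac_le_one hk hl
  have hk2 : k ^ (-(1/2):ℝ) ≤ 2 * l ^ (-(1/2):ℝ) := by
    have hkl : l/2 ≤ k := by linarith
    calc k ^ (-(1/2):ℝ) ≤ (l/2) ^ (-(1/2):ℝ) :=
          Real.rpow_le_rpow_of_nonpos (by linarith) hkl (by norm_num)
      _ = 2 ^ ((1/2):ℝ) * l ^ (-(1/2):ℝ) := by
          rw [Real.div_rpow hl0.le (by norm_num),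
            Real.rpow_neg (by norm_num : (0:ℝ) ≤ 2) (1/2), div_eq_mul_inv, inv_inv,
            mul_comm]
      _ ≤ 2 * l ^ (-(1/2):ℝ) := by
          apply mul_le_mul_of_nonneg_right _ (Real.rpow_nonneg hl0.le _)
          calc (2:ℝ) ^ ((1/2):ℝ) ≤ (2:ℝ) ^ (1:ℝ) :=
                Real.rpow_le_rpow_of_exponent_le one_le_two (by norm_num)
            _ = 2 := Real.rpow_one 2
  have key : rho k l ^ t * (1/l * (k/((k+l)*(|k-l|+1)))) * k ^ (-(1/2):ℝ)
      ≤ 2 * (1/l * 1) * (2 * l ^ (-(1/2):ℝ)) := by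
    apply mul_le_mul
    · apply mul_le_mul hρt
      · exact mul_le_mul_of_nonneg_left hfrac (by positivity)
      · exact mul_nonneg (by positivity) (frac_nonneg hk hl)
      · norm_num
    · exact hk2
    · exact Real.rpow_nonneg hk0.le _
    · positivity
  refine key.trans (le_of_eq ?_)
  rw [rpow_expand2 hl0 (a := -(3/2)) (-(1:ℝ)) (-(1/2)) (by norm_num), Real.rpow_neg_one]
  ring

/-- column estimate, region 2l ≤ k (large row index) -/
lemma colFarRight {t k l : ℝ} (ht0 : 0 ≤ t) (hl : 1 ≤ l) (h2l : 2*l ≤ k) :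
    rho k l ^ t * (1/l * (k/((k+l)*(|k-l|+1)))) * k ^ (-(1/2):ℝ)
      ≤ 2 * l ^ (-(1+t)) * k ^ (-(3/2-t)) := by
  have hl0 : (0:ℝ) < l := by linarith
  have hk0 : (0:ℝ) < k := by linarith
  have hlk : l ≤ k := by linarith
  have habs : |k - l| = k - l := abs_of_nonneg (by linarith)
  have hρ : rho k l = k/l := by unfold rho; rw [max_eq_left hlk, min_eq_right hlk]
  have hfrac : k/((k+l)*(|k-l|+1)) ≤ 2/k := by
    rw [habs, div_le_div_iff₀ (by nlinarith) hk0]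
    nlinarith
  have h1 : rho k l ^ t * (1/l * (k/((k+l)*(|k-l|+1)))) * k ^ (-(1/2):ℝ)
      ≤ (k/l) ^ t * (1/l * (2/k)) * k ^ (-(1/2):ℝ) := by
    rw [hρ]
    apply mul_le_mul_of_nonneg_right _ (Real.rpow_nonneg hk0.le _)
    apply mul_le_mul_of_nonneg_left _ (Real.rpow_nonneg (by positivity) t)
    exact mul_le_mul_of_nonneg_left hfrac (by positivity)
  refine h1.trans (le_of_eq ?_)
  rw [Real.div_rpow hk0.le hl0.le,
    rpow_expand2 hl0 (a := -(1+t)) (-(1:ℝ)) (-t) (by ring),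
    rpow_expand3 hk0 (a := -(3/2-t)) t (-(1:ℝ)) (-(1/2)) (by ring),
    Real.rpow_neg hl0.le t, Real.rpow_neg_one, Real.rpow_neg_one]
  ring

/-- uniform bound K'(k,l) k^{-1/2} ≤ 2 l^{-1/2} -/
lemma kp_mul_le {t k l : ℝ} (ht0 : 0 ≤ t) (ht : t ≤ 1/2) (hk : 1 ≤ k) (hl : 1 ≤ l) :
    Kp t k l * k ^ (-(1/2):ℝ) ≤ 2 * l ^ (-(1/2):ℝ) := by
  have hk0 : (0:ℝ) < k := by linarith
  have hl0 : (0:ℝ) < l := by linarith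
  have h1 : rho k l ≤ k * l := by
    have : rho k l ≤ max k l := by
      unfold rho
      apply div_le_self (le_trans (by linarith) (le_max_left k l))
      exact le_min hk hl
    refine this.trans (max_le ?_ ?_)
    · nlinarith
    · nlinarith
  have h2 : rho k l ^ t ≤ (k*l) ^ ((1/2):ℝ) := by
    calc rho k l ^ t ≤ (k*l) ^ t := Real.rpow_le_rpow (rho_nonneg hk hl) h1 ht0
      _ ≤ (k*l) ^ ((1/2):ℝ) :=
          Real.rpow_le_rpow_of_exponent_le (by nlinarith) ht
  have h3 : Kr k l ≤ 2 * (1/l) := by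
    unfold Kr
    rw [mul_comm (2:ℝ) (1/l)]
    apply mul_le_mul_of_nonneg_left _ (by positivity)
    have := frac_le_one hk hl
    have h1k : 1/k ≤ 1 := by rw [div_le_one hk0]; exact hk
    linarith
  have key : Kp t k l * k ^ (-(1/2):ℝ)
      ≤ ((k*l) ^ ((1/2):ℝ) * (2 * (1/l))) * k ^ (-(1/2):ℝ) := by
    apply mul_le_mul_of_nonneg_right _ (Real.rpow_nonneg hk0.le _)
    unfold Kp
    exact mul_le_mul h2 h3 (Kr_nonneg hk hl) (Real.rpow_nonneg (by positivity) _)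
  refine key.trans (le_of_eq ?_)
  rw [Real.mul_rpow hk0.le hl0.le]
  have e1 : k ^ ((1/2):ℝ) * k ^ (-(1/2):ℝ) = 1 := by
    rw [rpow_merge hk0 (show (1/2:ℝ) + (-(1/2)) = 0 by ring), Real.rpow_zero]
  have e2 : l ^ ((1/2):ℝ) * l ^ (-1:ℝ) = l ^ (-(1/2):ℝ) :=
    rpow_merge hl0 (by norm_num)
  calc k ^ ((1/2):ℝ) * l ^ ((1/2):ℝ) * (2 * (1/l)) * k ^ (-(1/2):ℝ)
      = 2 * (k ^ ((1/2):ℝ) * k ^ (-(1/2):ℝ)) * (l ^ ((1/2):ℝ) * l ^ (-1:ℝ)) := by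
        rw [Real.rpow_neg_one]; ring
    _ = 2 * l ^ (-(1/2):ℝ) := by rw [e1, e2, mul_one]

/-- weight ratio: (1+k²+Z²) ≤ ρ² (1+l²+Z²) -/
lemma ratio_sq {Z k l : ℝ} (hk : 1 ≤ k) (hl : 1 ≤ l) :
    1 + k^2 + Z^2 ≤ rho k l ^ 2 * (1 + l^2 + Z^2) := by
  have hk0 : (0:ℝ) < k := by linarith
  have hl0 : (0:ℝ) < l := by linarith
  rcases le_total l k with h | h
  · have hρ : rho k l = k/l := by unfold rho; rw [max_eq_left h, min_eq_right h]
    rw [hρ, div_pow, div_mul_eq_mul_div, le_div_iff₀ (by positivity)]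
    have h2 : l^2 ≤ k^2 := by nlinarith
    nlinarith [mul_le_mul_of_nonneg_right h2 (sq_nonneg Z)]
  · have hρ : rho k l = l/k := by unfold rho; rw [max_eq_right h, min_eq_left h]
    rw [hρ, div_pow, div_mul_eq_mul_div, le_div_iff₀ (by positivity)]
    have h2 : k^2 ≤ l^2 := by nlinarith
    nlinarith [mul_le_mul_of_nonneg_right h2 (sq_nonneg Z),
      mul_le_mul h2 h2 (sq_nonneg k) (sq_nonneg l)]

/-- weighted comparison uniform in Z -/
lemma weight_ratio {σ Z k l : ℝ} (hk : 1 ≤ k) (hl : 1 ≤ l) :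
    (1 + k^2 + Z^2) ^ σ ≤ rho k l ^ (2*|σ|) * (1 + l^2 + Z^2) ^ σ := by
  have hρ0 : (0:ℝ) < rho k l := lt_of_lt_of_le one_pos (one_le_rho hk hl)
  have hb1 : (0:ℝ) < 1 + k^2 + Z^2 := by positivity
  have hb2 : (0:ℝ) < 1 + l^2 + Z^2 := by positivity
  rcases le_or_gt 0 σ with hσ | hσ
  · have h1 := Real.rpow_le_rpow hb1.le (ratio_sq hk hl (Z := Z)) hσ
    rw [Real.mul_rpow (by positivity) hb2.le] at h1
    have e : (rho k l ^ 2) ^ σ = rho k l ^ (2*|σ|) := by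
      rw [abs_of_nonneg hσ, ← Real.rpow_natCast_mul hρ0.le 2 σ]
      norm_num
    rwa [e] at h1
  · have h2 := ratio_sq hl hk (Z := Z)
    rw [← rho_comm] at h2
    have h3 : (1 + l^2 + Z^2) / rho k l ^ 2 ≤ 1 + k^2 + Z^2 := by
      rw [div_le_iff₀ (by positivity)]
      nlinarith [h2]
    have h4 := Real.rpow_le_rpow_of_nonpos (by positivity) h3 hσ.le
    rw [Real.div_rpow hb2.le (by positivity)] at h4
    have e : (1 + l^2 + Z^2) ^ σ / (rho k l ^ 2) ^ σ
        = rho k l ^ (2*|σ|) * (1 + l^2 + Z^2) ^ σ := by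
      rw [abs_of_neg hσ, ← Real.rpow_natCast_mul hρ0.le 2 σ]
      rw [div_eq_mul_inv, ← Real.rpow_neg hρ0.le, mul_comm]
      norm_num
    rwa [e] at h4

/-- constants -/
def AAc (t : ℝ) : ℝ := 4*ZS (3/2+t) + 4*ZS (3/2-t) + 2*ZS (3/2) + 28

lemma AAc_pos {t : ℝ} : 0 < AAc t := by
  have h1 := zs_nonneg (3/2+t)
  have h2 := zs_nonneg (3/2-t)
  have h3 := zs_nonneg (3/2)
  unfold AAc; linarith

/-- if-indicator nonneg -/
lemma if_nonneg {c : Prop} [Decidable c] {v : ℝ} (hv : 0 ≤ v) :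
    0 ≤ if c then v else 0 := by split_ifs <;> simp [hv]

/-- Row Schur bound. -/
lemma row_bound {t : ℝ} (ht0 : 0 ≤ t) (ht : t < 1/2) (i : ℕ) :
    Summable (fun j : ℕ => Kp t ((i:ℝ)+1) ((j:ℝ)+1) * ((j:ℝ)+1) ^ (-(1/2):ℝ)) ∧
    ∑' j : ℕ, (Kp t ((i:ℝ)+1) ((j:ℝ)+1) * ((j:ℝ)+1) ^ (-(1/2):ℝ))
      ≤ AAc t * ((i:ℝ)+1) ^ (-(1/2):ℝ) := by
  have hk1 : (1:ℝ) ≤ (i:ℝ)+1 := one_le_cast_succ i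
  have hk0 : (0:ℝ) < (i:ℝ)+1 := by linarith
  have hpt : ∀ j : ℕ, Kp t ((i:ℝ)+1) ((j:ℝ)+1) * ((j:ℝ)+1) ^ (-(1/2):ℝ) ≤ (3*((i:ℝ)+1)^(t-1)) * ((j:ℝ)+1)^(-(3/2+t)) + (((i:ℝ)+1)^(-(1+t)) * ((j:ℝ)+1)^(-(3/2-t)) + ((if j < 2*i+1 then 8*((i:ℝ)+1)^(-(3/2):ℝ) else 0) + (2*((i:ℝ)+1)^(-1:ℝ)) * ((j:ℝ)+1)^(-(3/2):ℝ))) := by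
    intro j
    have hl1 : (1:ℝ) ≤ (j:ℝ)+1 := one_le_cast_succ j
    have hl0 : (0:ℝ) < (j:ℝ)+1 := by linarith
    have split : Kp t ((i:ℝ)+1) ((j:ℝ)+1) * ((j:ℝ)+1) ^ (-(1/2):ℝ)
        = rho ((i:ℝ)+1) ((j:ℝ)+1) ^ t * (1/((j:ℝ)+1) * (1/((i:ℝ)+1))) * ((j:ℝ)+1) ^ (-(1/2):ℝ)
        + rho ((i:ℝ)+1) ((j:ℝ)+1) ^ t
          * (1/((j:ℝ)+1) * (((i:ℝ)+1)/((((i:ℝ)+1)+((j:ℝ)+1))*(|((i:ℝ)+1)-((j:ℝ)+1)|+1))))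
          * ((j:ℝ)+1) ^ (-(1/2):ℝ) := by
      unfold Kp Kr; ring
    have h1 := part1_bound (t := t) ht0 hk1 hl1
    have hnn1 : (0:ℝ) ≤ ((i:ℝ)+1)^(t-1) * ((j:ℝ)+1)^(-(3/2+t)) := by positivity
    have hnn2 : (0:ℝ) ≤ (2*((i:ℝ)+1)^(-1:ℝ)) * ((j:ℝ)+1)^(-(3/2):ℝ) := by positivity
    have hnnif : (0:ℝ) ≤ (if j < 2*i+1 then 8*((i:ℝ)+1)^(-(3/2):ℝ) else 0) :=
      if_nonneg (by positivity)
    rcases le_or_gt (2*(j+1)) (i+1) with hreg | hreg1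
    · have hr : 2*((j:ℝ)+1) ≤ (i:ℝ)+1 := by exact_mod_cast hreg
      have h2 := rowFarLeft (t := t) (k := (i:ℝ)+1) (l := (j:ℝ)+1) ht0 hl1 hr
      rw [split]
      linarith [h1, h2, hnnif, hnn2]
    · rcases lt_or_ge j (2*i+1) with hreg2 | hreg2
      · have hr1 : (i:ℝ)+1 < 2*((j:ℝ)+1) := by exact_mod_cast hreg1
        have hr2 : (j:ℝ)+1 < 2*((i:ℝ)+1) := by
          have hn : j + 1 < 2*(i+1) := by omega
          exact_mod_cast hn
        have h2 := rowNear (t := t) (k := (i:ℝ)+1) (l := (j:ℝ)+1) ht0 ht.le hk1 hl1 hr1 hr2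
        rw [split, if_pos hreg2]
        linarith [h1, h2, hnn1, hnn2]
      · have hr : 2*((i:ℝ)+1) ≤ (j:ℝ)+1 := by
          have hn : 2*(i+1) ≤ j + 1 := by omega
          exact_mod_cast hn
        have h2 := rowFarRight (t := t) (k := (i:ℝ)+1) (l := (j:ℝ)+1) ht0 ht.le hk1 hr
        rw [split]
        linarith [h1, h2, hnn1, hnnif]
  have hs1 : Summable (fun j : ℕ => (3*((i:ℝ)+1)^(t-1)) * ((j:ℝ)+1)^(-(3/2+t))) :=
    (summable_zs (by linarith)).mul_left _
  have hs2 : Summable (fun j : ℕ => ((i:ℝ)+1)^(-(1+t)) * ((j:ℝ)+1)^(-(3/2-t))) :=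
    (summable_zs (by linarith)).mul_left _
  have hs3 : Summable (fun j : ℕ => (if j < 2*i+1 then 8*((i:ℝ)+1)^(-(3/2):ℝ) else 0)) := by
    apply summable_of_ne_finset_zero (s := Finset.range (2*i+1))
    intro b hb
    rw [if_neg]
    simpa using hb
  have hs4 : Summable (fun j : ℕ => (2*((i:ℝ)+1)^(-1:ℝ)) * ((j:ℝ)+1)^(-(3/2):ℝ)) :=
    (summable_zs (by norm_num)).mul_left _
  have hsG : Summable (fun j : ℕ => (3*((i:ℝ)+1)^(t-1)) * ((j:ℝ)+1)^(-(3/2+t)) + (((i:ℝ)+1)^(-(1+t)) * ((j:ℝ)+1)^(-(3/2-t)) + ((if j < 2*i+1 then 8*((i:ℝ)+1)^(-(3/2):ℝ) else 0) + (2*((i:ℝ)+1)^(-1:ℝ)) * ((j:ℝ)+1)^(-(3/2):ℝ)))) :=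
    hs1.add (hs2.add (hs3.add hs4))
  have hsK : Summable (fun j : ℕ => Kp t ((i:ℝ)+1) ((j:ℝ)+1) * ((j:ℝ)+1) ^ (-(1/2):ℝ)) := by
    apply Summable.of_nonneg_of_le _ hpt hsG
    intro j
    exact mul_nonneg (Kp_nonneg hk1 (one_le_cast_succ j))
      (Real.rpow_nonneg (by positivity) _)
  refine ⟨hsK, ?_⟩
  refine (Summable.tsum_le_tsum hpt hsK hsG).trans ?_
  have e0 : ∑' j : ℕ, ((3*((i:ℝ)+1)^(t-1)) * ((j:ℝ)+1)^(-(3/2+t)) + (((i:ℝ)+1)^(-(1+t)) * ((j:ℝ)+1)^(-(3/2-t)) + ((if j < 2*i+1 then 8*((i:ℝ)+1)^(-(3/2):ℝ) else 0) + (2*((i:ℝ)+1)^(-1:ℝ)) * ((j:ℝ)+1)^(-(3/2):ℝ))))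
      = (3*((i:ℝ)+1)^(t-1)) * ZS (3/2+t)
      + (((i:ℝ)+1)^(-(1+t)) * ZS (3/2-t)
      + ((∑' j : ℕ, (if j < 2*i+1 then 8*((i:ℝ)+1)^(-(3/2):ℝ) else 0))
      + (2*((i:ℝ)+1)^(-1:ℝ)) * ZS (3/2))) := by
    rw [Summable.tsum_add hs1 (hs2.add (hs3.add hs4)), Summable.tsum_add hs2 (hs3.add hs4),
      Summable.tsum_add hs3 hs4, tsum_mul_left, tsum_mul_left, tsum_mul_left]
    rfl
  rw [e0]
  have hmono : ∀ a : ℝ, a ≤ -(1/2) → ((i:ℝ)+1)^a ≤ ((i:ℝ)+1)^(-(1/2):ℝ) :=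
    fun a ha => Real.rpow_le_rpow_of_exponent_le hk1 ha
  have hb1 : (3*((i:ℝ)+1)^(t-1)) * ZS (3/2+t) ≤ 3*ZS (3/2+t) * ((i:ℝ)+1)^(-(1/2):ℝ) := by
    have hm := hmono (t-1) (by linarith)
    calc (3*((i:ℝ)+1)^(t-1)) * ZS (3/2+t) = 3*ZS (3/2+t) * ((i:ℝ)+1)^(t-1) := by ring
      _ ≤ 3*ZS (3/2+t) * ((i:ℝ)+1)^(-(1/2):ℝ) :=
          mul_le_mul_of_nonneg_left hm (by nlinarith [zs_nonneg (3/2+t)])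
  have hb2 : ((i:ℝ)+1)^(-(1+t)) * ZS (3/2-t) ≤ ZS (3/2-t) * ((i:ℝ)+1)^(-(1/2):ℝ) := by
    have hm := hmono (-(1+t)) (by linarith)
    calc ((i:ℝ)+1)^(-(1+t)) * ZS (3/2-t) = ZS (3/2-t) * ((i:ℝ)+1)^(-(1+t)) := by ring
      _ ≤ ZS (3/2-t) * ((i:ℝ)+1)^(-(1/2):ℝ) :=
          mul_le_mul_of_nonneg_left hm (zs_nonneg _)
  have hb3 : (∑' j : ℕ, (if j < 2*i+1 then 8*((i:ℝ)+1)^(-(3/2):ℝ) else 0))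
      ≤ 16 * ((i:ℝ)+1)^(-(1/2):ℝ) := by
    rw [tsum_eq_sum (s := Finset.range (2*i+1)) (fun b hb => by rw [if_neg]; simpa using hb)]
    rw [Finset.sum_congr rfl (fun j hj => if_pos (Finset.mem_range.mp hj)),
      Finset.sum_const, Finset.card_range, nsmul_eq_mul]
    have hcard : ((2*i+1 : ℕ):ℝ) ≤ 2*((i:ℝ)+1) := by push_cast; linarith
    have e1 : ((i:ℝ)+1) * ((i:ℝ)+1)^(-(3/2):ℝ) = ((i:ℝ)+1)^(-(1/2):ℝ) := by
      nth_rewrite 1 [← Real.rpow_one ((i:ℝ)+1)]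
      exact rpow_merge hk0 (by norm_num)
    calc ((2*i+1 : ℕ):ℝ) * (8*((i:ℝ)+1)^(-(3/2):ℝ))
        ≤ 2*((i:ℝ)+1) * (8*((i:ℝ)+1)^(-(3/2):ℝ)) :=
          mul_le_mul_of_nonneg_right hcard (by positivity)
      _ = 16 * (((i:ℝ)+1) * ((i:ℝ)+1)^(-(3/2):ℝ)) := by ring
      _ = 16 * ((i:ℝ)+1)^(-(1/2):ℝ) := by rw [e1]
  have hb4 : (2*((i:ℝ)+1)^(-1:ℝ)) * ZS (3/2) ≤ 2*ZS (3/2) * ((i:ℝ)+1)^(-(1/2):ℝ) := by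
    have hm := hmono (-1) (by norm_num)
    calc (2*((i:ℝ)+1)^(-1:ℝ)) * ZS (3/2) = 2*ZS (3/2) * ((i:ℝ)+1)^(-1:ℝ) := by ring
      _ ≤ 2*ZS (3/2) * ((i:ℝ)+1)^(-(1/2):ℝ) :=
          mul_le_mul_of_nonneg_left hm (by nlinarith [zs_nonneg (3/2)])
  have hAA : 3*ZS (3/2+t) + ZS (3/2-t) + 16 + 2*ZS (3/2) ≤ AAc t := by
    have h1 := zs_nonneg (3/2+t)
    have h2 := zs_nonneg (3/2-t)
    unfold AAc; linarith
  have hpow : (0:ℝ) ≤ ((i:ℝ)+1)^(-(1/2):ℝ) := Real.rpow_nonneg hk0.le _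
  linarith [hb1, hb2, hb3, hb4, mul_le_mul_of_nonneg_right hAA hpow]

/-- Column Schur bound. -/
lemma col_bound {t : ℝ} (ht0 : 0 ≤ t) (ht : t < 1/2) (i : ℕ) :
    Summable (fun j : ℕ => Kp t ((j:ℝ)+1) ((i:ℝ)+1) * ((j:ℝ)+1) ^ (-(1/2):ℝ)) ∧
    ∑' j : ℕ, (Kp t ((j:ℝ)+1) ((i:ℝ)+1) * ((j:ℝ)+1) ^ (-(1/2):ℝ))
      ≤ AAc t * ((i:ℝ)+1) ^ (-(1/2):ℝ) := by
  have hl1 : (1:ℝ) ≤ (i:ℝ)+1 := one_le_cast_succ i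
  have hl0 : (0:ℝ) < (i:ℝ)+1 := by linarith
  have hpt : ∀ j : ℕ, Kp t ((j:ℝ)+1) ((i:ℝ)+1) * ((j:ℝ)+1) ^ (-(1/2):ℝ) ≤ ((i:ℝ)+1)^(t-1) * ((j:ℝ)+1)^(-(3/2+t)) + ((3*((i:ℝ)+1)^(-(1+t))) * ((j:ℝ)+1)^(-(3/2-t)) + ((if 2*(j+1) ≤ i+1 then 2*((i:ℝ)+1)^(-(5/2):ℝ) else 0) + (if j < 2*i+1 then 4*((i:ℝ)+1)^(-(3/2):ℝ) else 0))) := by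
    intro j
    have hk1 : (1:ℝ) ≤ (j:ℝ)+1 := one_le_cast_succ j
    have hk0 : (0:ℝ) < (j:ℝ)+1 := by linarith
    have split : Kp t ((j:ℝ)+1) ((i:ℝ)+1) * ((j:ℝ)+1) ^ (-(1/2):ℝ)
        = rho ((j:ℝ)+1) ((i:ℝ)+1) ^ t * (1/((i:ℝ)+1) * (1/((j:ℝ)+1))) * ((j:ℝ)+1) ^ (-(1/2):ℝ)
        + rho ((j:ℝ)+1) ((i:ℝ)+1) ^ t
          * (1/((i:ℝ)+1) * (((j:ℝ)+1)/((((j:ℝ)+1)+((i:ℝ)+1))*(|((j:ℝ)+1)-((i:ℝ)+1)|+1))))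
          * ((j:ℝ)+1) ^ (-(1/2):ℝ) := by
      unfold Kp Kr; ring
    have h1 : rho ((j:ℝ)+1) ((i:ℝ)+1) ^ t * (1/((i:ℝ)+1) * (1/((j:ℝ)+1))) * ((j:ℝ)+1) ^ (-(1/2):ℝ)
        ≤ ((i:ℝ)+1)^(t-1) * ((j:ℝ)+1)^(-(3/2+t))
          + ((i:ℝ)+1)^(-(1+t)) * ((j:ℝ)+1)^(-(3/2-t)) := by
      have h0 := part1_bound (t := t) (k := (i:ℝ)+1) (l := (j:ℝ)+1) ht0 hl1 hk1
      calc rho ((j:ℝ)+1) ((i:ℝ)+1) ^ t * (1/((i:ℝ)+1) * (1/((j:ℝ)+1))) * ((j:ℝ)+1) ^ (-(1/2):ℝ)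
          = rho ((i:ℝ)+1) ((j:ℝ)+1) ^ t * (1/((j:ℝ)+1) * (1/((i:ℝ)+1))) * ((j:ℝ)+1) ^ (-(1/2):ℝ) := by
            rw [rho_comm ((j:ℝ)+1) ((i:ℝ)+1)]; ring
        _ ≤ _ := h0
    have hnn2 : (0:ℝ) ≤ ((i:ℝ)+1)^(-(1+t)) * ((j:ℝ)+1)^(-(3/2-t)) := by positivity
    have hnnif3 : (0:ℝ) ≤ (if 2*(j+1) ≤ i+1 then 2*((i:ℝ)+1)^(-(5/2):ℝ) else 0) := if_nonneg (by positivity)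
    have hnnif4 : (0:ℝ) ≤ (if j < 2*i+1 then 4*((i:ℝ)+1)^(-(3/2):ℝ) else 0) := if_nonneg (by positivity)
    rcases le_or_gt (2*(j+1)) (i+1) with hreg | hreg1
    · have hr : 2*((j:ℝ)+1) ≤ (i:ℝ)+1 := by exact_mod_cast hreg
      have h2 := colFarLeft (t := t) (k := (j:ℝ)+1) (l := (i:ℝ)+1) ht0 ht.le hk1 hr
      rw [split, if_pos hreg]
      linarith [h1, h2, hnn2, hnnif4]
    · rcases lt_or_ge j (2*i+1) with hreg2 | hreg2
      · have hr1 : (i:ℝ)+1 < 2*((j:ℝ)+1) := by exact_mod_cast hreg1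
        have hr2 : (j:ℝ)+1 < 2*((i:ℝ)+1) := by
          have hn : j + 1 < 2*(i+1) := by omega
          exact_mod_cast hn
        have h2 := colNear (t := t) (k := (j:ℝ)+1) (l := (i:ℝ)+1) ht0 ht.le hk1 hl1 hr2 hr1
        rw [split, if_neg (by omega), if_pos hreg2]
        linarith [h1, h2, hnn2]
      · have hr : 2*((i:ℝ)+1) ≤ (j:ℝ)+1 := by
          have hn : 2*(i+1) ≤ j + 1 := by omega
          exact_mod_cast hn
        have h2 := colFarRight (t := t) (k := (j:ℝ)+1) (l := (i:ℝ)+1) ht0 hl1 hr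
        rw [split, if_neg (by omega), if_neg (by omega)]
        linarith [h1, h2]
  have hs1 : Summable (fun j : ℕ => ((i:ℝ)+1)^(t-1) * ((j:ℝ)+1)^(-(3/2+t))) :=
    (summable_zs (by linarith)).mul_left _
  have hs2 : Summable (fun j : ℕ => (3*((i:ℝ)+1)^(-(1+t))) * ((j:ℝ)+1)^(-(3/2-t))) :=
    (summable_zs (by linarith)).mul_left _
  have hs3 : Summable (fun j : ℕ => (if 2*(j+1) ≤ i+1 then 2*((i:ℝ)+1)^(-(5/2):ℝ) else 0)) := by
    apply summable_of_ne_finset_zero (s := Finset.range (i+1))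
    intro b hb
    simp only [Finset.mem_range, not_lt] at hb
    rw [if_neg (by omega)]
  have hs4 : Summable (fun j : ℕ => (if j < 2*i+1 then 4*((i:ℝ)+1)^(-(3/2):ℝ) else 0)) := by
    apply summable_of_ne_finset_zero (s := Finset.range (2*i+1))
    intro b hb
    rw [if_neg]
    simpa using hb
  have hsG : Summable (fun j : ℕ => ((i:ℝ)+1)^(t-1) * ((j:ℝ)+1)^(-(3/2+t)) + ((3*((i:ℝ)+1)^(-(1+t))) * ((j:ℝ)+1)^(-(3/2-t)) + ((if 2*(j+1) ≤ i+1 then 2*((i:ℝ)+1)^(-(5/2):ℝ) else 0) + (if j < 2*i+1 then 4*((i:ℝ)+1)^(-(3/2):ℝ) else 0)))) :=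
    hs1.add (hs2.add (hs3.add hs4))
  have hsK : Summable (fun j : ℕ => Kp t ((j:ℝ)+1) ((i:ℝ)+1) * ((j:ℝ)+1) ^ (-(1/2):ℝ)) := by
    apply Summable.of_nonneg_of_le _ hpt hsG
    intro j
    exact mul_nonneg (Kp_nonneg (one_le_cast_succ j) hl1)
      (Real.rpow_nonneg (by positivity) _)
  refine ⟨hsK, ?_⟩
  refine (Summable.tsum_le_tsum hpt hsK hsG).trans ?_
  have e0 : ∑' j : ℕ, (((i:ℝ)+1)^(t-1) * ((j:ℝ)+1)^(-(3/2+t)) + ((3*((i:ℝ)+1)^(-(1+t))) * ((j:ℝ)+1)^(-(3/2-t)) + ((if 2*(j+1) ≤ i+1 then 2*((i:ℝ)+1)^(-(5/2):ℝ) else 0) + (if j < 2*i+1 then 4*((i:ℝ)+1)^(-(3/2):ℝ) else 0))))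
      = ((i:ℝ)+1)^(t-1) * ZS (3/2+t)
      + ((3*((i:ℝ)+1)^(-(1+t))) * ZS (3/2-t)
      + ((∑' j : ℕ, (if 2*(j+1) ≤ i+1 then 2*((i:ℝ)+1)^(-(5/2):ℝ) else 0))
      + (∑' j : ℕ, (if j < 2*i+1 then 4*((i:ℝ)+1)^(-(3/2):ℝ) else 0)))) := by
    rw [Summable.tsum_add hs1 (hs2.add (hs3.add hs4)), Summable.tsum_add hs2 (hs3.add hs4),
      Summable.tsum_add hs3 hs4, tsum_mul_left, tsum_mul_left]
    rfl
  rw [e0]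
  have hmono : ∀ a : ℝ, a ≤ -(1/2) → ((i:ℝ)+1)^a ≤ ((i:ℝ)+1)^(-(1/2):ℝ) :=
    fun a ha => Real.rpow_le_rpow_of_exponent_le hl1 ha
  have hb1 : ((i:ℝ)+1)^(t-1) * ZS (3/2+t) ≤ ZS (3/2+t) * ((i:ℝ)+1)^(-(1/2):ℝ) := by
    have hm := hmono (t-1) (by linarith)
    calc ((i:ℝ)+1)^(t-1) * ZS (3/2+t) = ZS (3/2+t) * ((i:ℝ)+1)^(t-1) := by ring
      _ ≤ ZS (3/2+t) * ((i:ℝ)+1)^(-(1/2):ℝ) :=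
          mul_le_mul_of_nonneg_left hm (zs_nonneg _)
  have hb2 : (3*((i:ℝ)+1)^(-(1+t))) * ZS (3/2-t) ≤ 3*ZS (3/2-t) * ((i:ℝ)+1)^(-(1/2):ℝ) := by
    have hm := hmono (-(1+t)) (by linarith)
    calc (3*((i:ℝ)+1)^(-(1+t))) * ZS (3/2-t) = 3*ZS (3/2-t) * ((i:ℝ)+1)^(-(1+t)) := by ring
      _ ≤ 3*ZS (3/2-t) * ((i:ℝ)+1)^(-(1/2):ℝ) :=
          mul_le_mul_of_nonneg_left hm (by nlinarith [zs_nonneg (3/2-t)])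
  have hb3 : (∑' j : ℕ, (if 2*(j+1) ≤ i+1 then 2*((i:ℝ)+1)^(-(5/2):ℝ) else 0)) ≤ 2 * ((i:ℝ)+1)^(-(1/2):ℝ) := by
    rw [tsum_eq_sum (s := Finset.range (i+1))
      (fun b hb => by
        simp only [Finset.mem_range, not_lt] at hb
        rw [if_neg (by omega)])]
    have hle : ∑ j ∈ Finset.range (i+1), (if 2*(j+1) ≤ i+1 then 2*((i:ℝ)+1)^(-(5/2):ℝ) else 0)
        ≤ ∑ _j ∈ Finset.range (i+1), 2*((i:ℝ)+1)^(-(5/2):ℝ) := by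
      apply Finset.sum_le_sum
      intro j hj
      split_ifs
      · exact le_refl _
      · positivity
    refine hle.trans ?_
    rw [Finset.sum_const, Finset.card_range, nsmul_eq_mul]
    have hcast : ((i+1 : ℕ):ℝ) = (i:ℝ)+1 := by push_cast; ring
    have e1 : ((i:ℝ)+1) * ((i:ℝ)+1)^(-(5/2):ℝ) = ((i:ℝ)+1)^(-(3/2):ℝ) := by
      nth_rewrite 1 [← Real.rpow_one ((i:ℝ)+1)]
      exact rpow_merge hl0 (by norm_num)
    calc ((i+1 : ℕ):ℝ) * (2*((i:ℝ)+1)^(-(5/2):ℝ))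
        = 2 * (((i:ℝ)+1) * ((i:ℝ)+1)^(-(5/2):ℝ)) := by rw [hcast]; ring
      _ = 2 * ((i:ℝ)+1)^(-(3/2):ℝ) := by rw [e1]
      _ ≤ 2 * ((i:ℝ)+1)^(-(1/2):ℝ) := by
          apply mul_le_mul_of_nonneg_left (hmono (-(3/2)) (by norm_num)) (by norm_num)
  have hb4 : (∑' j : ℕ, (if j < 2*i+1 then 4*((i:ℝ)+1)^(-(3/2):ℝ) else 0)) ≤ 8 * ((i:ℝ)+1)^(-(1/2):ℝ) := by
    rw [tsum_eq_sum (s := Finset.range (2*i+1)) (fun b hb => by rw [if_neg]; simpa using hb)]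
    rw [Finset.sum_congr rfl (fun j hj => if_pos (Finset.mem_range.mp hj)),
      Finset.sum_const, Finset.card_range, nsmul_eq_mul]
    have hcard : ((2*i+1 : ℕ):ℝ) ≤ 2*((i:ℝ)+1) := by push_cast; linarith
    have e1 : ((i:ℝ)+1) * ((i:ℝ)+1)^(-(3/2):ℝ) = ((i:ℝ)+1)^(-(1/2):ℝ) := by
      nth_rewrite 1 [← Real.rpow_one ((i:ℝ)+1)]
      exact rpow_merge hl0 (by norm_num)
    calc ((2*i+1 : ℕ):ℝ) * (4*((i:ℝ)+1)^(-(3/2):ℝ))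
        ≤ 2*((i:ℝ)+1) * (4*((i:ℝ)+1)^(-(3/2):ℝ)) :=
          mul_le_mul_of_nonneg_right hcard (by positivity)
      _ = 8 * (((i:ℝ)+1) * ((i:ℝ)+1)^(-(3/2):ℝ)) := by ring
      _ = 8 * ((i:ℝ)+1)^(-(1/2):ℝ) := by rw [e1]
  have hAA : ZS (3/2+t) + 3*ZS (3/2-t) + 2 + 8 ≤ AAc t := by
    have h1 := zs_nonneg (3/2+t)
    have h2 := zs_nonneg (3/2-t)
    have h3 := zs_nonneg (3/2)
    unfold AAc; linarith
  have hpow : (0:ℝ) ≤ ((i:ℝ)+1)^(-(1/2):ℝ) := Real.rpow_nonneg hl0.le _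
  linarith [hb1, hb2, hb3, hb4, mul_le_mul_of_nonneg_right hAA hpow]

lemma amgm {x y lam u v : ℝ} (hl : 0 < lam) (hu : 0 < u) (hv : 0 < v) :
    x * y ≤ lam/2 * (x^2/u) * v + 1/(2*lam) * (y^2/v) * u := by
  rw [show lam/2 * (x^2/u) * v + 1/(2*lam) * (y^2/v) * u
      = (lam^2*v^2*x^2 + u^2*y^2)/(2*lam*u*v) by field_simp,
    le_div_iff₀ (by positivity)]
  nlinarith [sq_nonneg (lam*v*x - u*y)]

end Stmt17

end

open Stmt17 in
theorem stmt_17 (s : ℝ) (hs : s ∈ Set.Ioo (-(1:ℝ)/2) (1/2)) :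
    ∃ C > 0, ∀ (Z : ℝ), 1 ≤ Z → ∀ (φ c : ℕ → ℂ),
      Summable (fun l : ℕ => (1 + (l+1:ℝ)^2 + Z^2) ^ s * ‖c (l+1)‖ ^ 2) →
      (∀ k : ℕ, 1 ≤ k → ‖φ k‖ ≤
        ∑' l : ℕ, (‖c (l+1)‖ / (l+1:ℝ))
          * (1 / (k:ℝ) + (k:ℝ) / (((k:ℝ) + (l+1:ℝ)) * (|(k:ℝ) - (l+1:ℝ)| + 1)))) →
      ∑' k : ℕ, (1 + (k+1:ℝ)^2 + Z^2) ^ s * ‖φ (k+1)‖ ^ 2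
        ≤ C * ∑' l : ℕ, (1 + (l+1:ℝ)^2 + Z^2) ^ s * ‖c (l+1)‖ ^ 2 := by
  have ht0 : (0:ℝ) ≤ |s| := abs_nonneg s
  have ht : |s| < 1/2 := by
    rw [abs_lt]
    exact ⟨by linarith [hs.1], hs.2⟩
  refine ⟨AAc |s| ^ 2, pow_pos AAc_pos 2, ?_⟩
  intro Z hZ φ c hsumc hφ
  set t := |s| with htdef
  set lam := (AAc t)⁻¹ with hlam
  have hA : 0 < AAc t := AAc_pos
  have hlam0 : 0 < lam := inv_pos.mpr hA
  have hbase : ∀ n : ℕ, (0:ℝ) < 1 + ((n:ℝ)+1)^2 + Z^2 := fun n => by positivity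
  have hv : ∀ n : ℕ, (0:ℝ) < (1 + ((n:ℝ)+1)^2 + Z^2) ^ (s/2) := fun n => Real.rpow_pos_of_pos (hbase n) _
  have hhpos : ∀ n : ℕ, (0:ℝ) < ((n:ℝ)+1) ^ (-(1/2):ℝ) := fun n => Real.rpow_pos_of_pos (by positivity) _
  have hx0 : ∀ n : ℕ, (0:ℝ) ≤ (1 + ((n:ℝ)+1)^2 + Z^2) ^ (s/2) * ‖φ (n+1)‖ :=
    fun n => mul_nonneg (hv n).le (norm_nonneg _)
  have hvsq : ∀ n : ℕ, ((1 + ((n:ℝ)+1)^2 + Z^2) ^ (s/2))^2 = (1 + ((n:ℝ)+1)^2 + Z^2) ^ s := by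
    intro n
    rw [← Real.rpow_natCast ((1 + ((n:ℝ)+1)^2 + Z^2) ^ (s/2)) 2, ← Real.rpow_mul (hbase n).le]
    norm_num
  have hLHS : ∀ n : ℕ, (1 + ((n:ℝ)+1)^2 + Z^2)^s * ‖φ (n+1)‖^2
      = ((1 + ((n:ℝ)+1)^2 + Z^2) ^ (s/2) * ‖φ (n+1)‖)^2 := by
    intro n; rw [← hvsq]; ring
  have hRHS : ∀ n : ℕ, (1 + ((n:ℝ)+1)^2 + Z^2)^s * ‖c (n+1)‖^2
      = ((1 + ((n:ℝ)+1)^2 + Z^2) ^ (s/2) * ‖c (n+1)‖)^2 := by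
    intro n; rw [← hvsq]; ring
  have hsumy : Summable (fun j : ℕ => ((1 + ((j:ℝ)+1)^2 + Z^2) ^ (s/2) * ‖c (j+1)‖)^2) := hsumc.congr hRHS
  rw [tsum_congr hLHS, tsum_congr hRHS]
  -- the pointwise hypothesis, rewritten
  have hφ' : ∀ i : ℕ, ‖φ (i+1)‖
      ≤ ∑' j : ℕ, ‖c (j+1)‖ * Kr ((i:ℝ)+1) ((j:ℝ)+1) := by
    intro i
    have h0 := hφ (i+1) (Nat.le_add_left 1 i)
    refine h0.trans (le_of_eq (tsum_congr ?_))
    intro j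
    unfold Kr
    push_cast
    ring
  have hxle : ∀ i : ℕ, (1 + ((i:ℝ)+1)^2 + Z^2) ^ (s/2) * ‖φ (i+1)‖
      ≤ ∑' j : ℕ, (1 + ((i:ℝ)+1)^2 + Z^2) ^ (s/2) * (‖c (j+1)‖ * Kr ((i:ℝ)+1) ((j:ℝ)+1)) := by
    intro i
    rw [tsum_mul_left]
    exact mul_le_mul_of_nonneg_left (hφ' i) (hv i).le
  -- pointwise AM-GM split
  have hterm : ∀ i j : ℕ,
      ((1 + ((i:ℝ)+1)^2 + Z^2) ^ (s/2) * ‖φ (i+1)‖) * ((1 + ((i:ℝ)+1)^2 + Z^2) ^ (s/2) * (‖c (j+1)‖ * Kr ((i:ℝ)+1) ((j:ℝ)+1)))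
      ≤ lam/2 * (((1 + ((i:ℝ)+1)^2 + Z^2) ^ (s/2) * ‖φ (i+1)‖)^2/((i:ℝ)+1) ^ (-(1/2):ℝ)) * (Kp t ((i:ℝ)+1) ((j:ℝ)+1) * ((j:ℝ)+1) ^ (-(1/2):ℝ)) + 1/(2*lam) * (((1 + ((j:ℝ)+1)^2 + Z^2) ^ (s/2) * ‖c (j+1)‖)^2/((j:ℝ)+1) ^ (-(1/2):ℝ)) * (Kp t ((i:ℝ)+1) ((j:ℝ)+1) * ((i:ℝ)+1) ^ (-(1/2):ℝ)) := by
    intro i j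
    have hi1 : (1:ℝ) ≤ (i:ℝ)+1 := one_le_cast_succ i
    have hj1 : (1:ℝ) ≤ (j:ℝ)+1 := one_le_cast_succ j
    have hKrnn := Kr_nonneg hi1 hj1
    have habs2 : 2*|s/2| = t := by rw [abs_div, abs_two, htdef]; ring
    have hwr := weight_ratio (σ := s/2) (Z := Z) hi1 hj1
    rw [habs2] at hwr
    calc ((1 + ((i:ℝ)+1)^2 + Z^2) ^ (s/2) * ‖φ (i+1)‖) * ((1 + ((i:ℝ)+1)^2 + Z^2) ^ (s/2) * (‖c (j+1)‖ * Kr ((i:ℝ)+1) ((j:ℝ)+1)))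
        = (((1 + ((i:ℝ)+1)^2 + Z^2) ^ (s/2) * ‖φ (i+1)‖) * (‖c (j+1)‖ * Kr ((i:ℝ)+1) ((j:ℝ)+1))) * ((1 + ((i:ℝ)+1)^2 + Z^2) ^ (s/2)) := by ring
      _ ≤ (((1 + ((i:ℝ)+1)^2 + Z^2) ^ (s/2) * ‖φ (i+1)‖) * (‖c (j+1)‖ * Kr ((i:ℝ)+1) ((j:ℝ)+1)))
            * (rho ((i:ℝ)+1) ((j:ℝ)+1) ^ t * ((1 + ((j:ℝ)+1)^2 + Z^2) ^ (s/2))) := by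
          apply mul_le_mul_of_nonneg_left hwr
          exact mul_nonneg (hx0 i) (mul_nonneg (norm_nonneg _) hKrnn)
      _ = Kp t ((i:ℝ)+1) ((j:ℝ)+1) * (((1 + ((i:ℝ)+1)^2 + Z^2) ^ (s/2) * ‖φ (i+1)‖) * ((1 + ((j:ℝ)+1)^2 + Z^2) ^ (s/2) * ‖c (j+1)‖)) := by unfold Kp; ring
      _ ≤ Kp t ((i:ℝ)+1) ((j:ℝ)+1) * (lam/2 * (((1 + ((i:ℝ)+1)^2 + Z^2) ^ (s/2) * ‖φ (i+1)‖)^2/((i:ℝ)+1) ^ (-(1/2):ℝ)) * ((j:ℝ)+1) ^ (-(1/2):ℝ)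
            + 1/(2*lam) * (((1 + ((j:ℝ)+1)^2 + Z^2) ^ (s/2) * ‖c (j+1)‖)^2/((j:ℝ)+1) ^ (-(1/2):ℝ)) * ((i:ℝ)+1) ^ (-(1/2):ℝ)) := by
          exact mul_le_mul_of_nonneg_left (amgm hlam0 (hhpos i) (hhpos j)) (Kp_nonneg hi1 hj1)
      _ = lam/2 * (((1 + ((i:ℝ)+1)^2 + Z^2) ^ (s/2) * ‖φ (i+1)‖)^2/((i:ℝ)+1) ^ (-(1/2):ℝ)) * (Kp t ((i:ℝ)+1) ((j:ℝ)+1) * ((j:ℝ)+1) ^ (-(1/2):ℝ)) + 1/(2*lam) * (((1 + ((j:ℝ)+1)^2 + Z^2) ^ (s/2) * ‖c (j+1)‖)^2/((j:ℝ)+1) ^ (-(1/2):ℝ)) * (Kp t ((i:ℝ)+1) ((j:ℝ)+1) * ((i:ℝ)+1) ^ (-(1/2):ℝ)) := by ring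
  -- summability of the two majorant families
  have hG1sum : ∀ i : ℕ, Summable (fun j : ℕ => lam/2 * (((1 + ((i:ℝ)+1)^2 + Z^2) ^ (s/2) * ‖φ (i+1)‖)^2/((i:ℝ)+1) ^ (-(1/2):ℝ)) * (Kp t ((i:ℝ)+1) ((j:ℝ)+1) * ((j:ℝ)+1) ^ (-(1/2):ℝ))) := by
    intro i
    exact (row_bound ht0 ht i).1.mul_left _
  have hG2nn : ∀ i j : ℕ, (0:ℝ) ≤ 1/(2*lam) * (((1 + ((j:ℝ)+1)^2 + Z^2) ^ (s/2) * ‖c (j+1)‖)^2/((j:ℝ)+1) ^ (-(1/2):ℝ)) * (Kp t ((i:ℝ)+1) ((j:ℝ)+1) * ((i:ℝ)+1) ^ (-(1/2):ℝ)) := by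
    intro i j
    have hi1 : (1:ℝ) ≤ (i:ℝ)+1 := one_le_cast_succ i
    have hj1 : (1:ℝ) ≤ (j:ℝ)+1 := one_le_cast_succ j
    apply mul_nonneg (mul_nonneg (by positivity) (by positivity))
    exact mul_nonneg (Kp_nonneg hi1 hj1) (hhpos i).le
  have hG2le : ∀ i j : ℕ, 1/(2*lam) * (((1 + ((j:ℝ)+1)^2 + Z^2) ^ (s/2) * ‖c (j+1)‖)^2/((j:ℝ)+1) ^ (-(1/2):ℝ)) * (Kp t ((i:ℝ)+1) ((j:ℝ)+1) * ((i:ℝ)+1) ^ (-(1/2):ℝ)) ≤ lam⁻¹ * ((1 + ((j:ℝ)+1)^2 + Z^2) ^ (s/2) * ‖c (j+1)‖)^2 := by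
    intro i j
    have hi1 : (1:ℝ) ≤ (i:ℝ)+1 := one_le_cast_succ i
    have hj1 : (1:ℝ) ≤ (j:ℝ)+1 := one_le_cast_succ j
    have hk := kp_mul_le (t := t) ht0 ht.le hi1 hj1
    have hhne : (((j:ℝ)+1) ^ (-(1/2):ℝ)) ≠ 0 := (hhpos j).ne'
    calc 1/(2*lam) * (((1 + ((j:ℝ)+1)^2 + Z^2) ^ (s/2) * ‖c (j+1)‖)^2/((j:ℝ)+1) ^ (-(1/2):ℝ)) * (Kp t ((i:ℝ)+1) ((j:ℝ)+1) * ((i:ℝ)+1) ^ (-(1/2):ℝ))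
        ≤ 1/(2*lam) * (((1 + ((j:ℝ)+1)^2 + Z^2) ^ (s/2) * ‖c (j+1)‖)^2/((j:ℝ)+1) ^ (-(1/2):ℝ)) * (2 * ((j:ℝ)+1) ^ (-(1/2):ℝ)) := by
          apply mul_le_mul_of_nonneg_left hk
          positivity
      _ = lam⁻¹ * ((1 + ((j:ℝ)+1)^2 + Z^2) ^ (s/2) * ‖c (j+1)‖)^2 := by field_simp
  have hG2sum : ∀ i : ℕ, Summable (fun j : ℕ => 1/(2*lam) * (((1 + ((j:ℝ)+1)^2 + Z^2) ^ (s/2) * ‖c (j+1)‖)^2/((j:ℝ)+1) ^ (-(1/2):ℝ)) * (Kp t ((i:ℝ)+1) ((j:ℝ)+1) * ((i:ℝ)+1) ^ (-(1/2):ℝ))) := by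
    intro i
    exact Summable.of_nonneg_of_le (hG2nn i) (hG2le i) (hsumy.mul_left _)
  -- the key pointwise bound
  have hkey : ∀ i : ℕ, ((1 + ((i:ℝ)+1)^2 + Z^2) ^ (s/2) * ‖φ (i+1)‖)^2
      ≤ (∑' j : ℕ, lam/2 * (((1 + ((i:ℝ)+1)^2 + Z^2) ^ (s/2) * ‖φ (i+1)‖)^2/((i:ℝ)+1) ^ (-(1/2):ℝ)) * (Kp t ((i:ℝ)+1) ((j:ℝ)+1) * ((j:ℝ)+1) ^ (-(1/2):ℝ))) + (∑' j : ℕ, 1/(2*lam) * (((1 + ((j:ℝ)+1)^2 + Z^2) ^ (s/2) * ‖c (j+1)‖)^2/((j:ℝ)+1) ^ (-(1/2):ℝ)) * (Kp t ((i:ℝ)+1) ((j:ℝ)+1) * ((i:ℝ)+1) ^ (-(1/2):ℝ))) := by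
    intro i
    have h1 : ((1 + ((i:ℝ)+1)^2 + Z^2) ^ (s/2) * ‖φ (i+1)‖)^2
        ≤ ∑' j : ℕ, ((1 + ((i:ℝ)+1)^2 + Z^2) ^ (s/2) * ‖φ (i+1)‖) * ((1 + ((i:ℝ)+1)^2 + Z^2) ^ (s/2) * (‖c (j+1)‖ * Kr ((i:ℝ)+1) ((j:ℝ)+1))) := by
      calc ((1 + ((i:ℝ)+1)^2 + Z^2) ^ (s/2) * ‖φ (i+1)‖)^2 = ((1 + ((i:ℝ)+1)^2 + Z^2) ^ (s/2) * ‖φ (i+1)‖) * ((1 + ((i:ℝ)+1)^2 + Z^2) ^ (s/2) * ‖φ (i+1)‖) := sq ((1 + ((i:ℝ)+1)^2 + Z^2) ^ (s/2) * ‖φ (i+1)‖)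
        _ ≤ ((1 + ((i:ℝ)+1)^2 + Z^2) ^ (s/2) * ‖φ (i+1)‖) * (∑' j : ℕ, (1 + ((i:ℝ)+1)^2 + Z^2) ^ (s/2) * (‖c (j+1)‖ * Kr ((i:ℝ)+1) ((j:ℝ)+1))) :=
            mul_le_mul_of_nonneg_left (hxle i) (hx0 i)
        _ = ∑' j : ℕ, ((1 + ((i:ℝ)+1)^2 + Z^2) ^ (s/2) * ‖φ (i+1)‖) * ((1 + ((i:ℝ)+1)^2 + Z^2) ^ (s/2) * (‖c (j+1)‖ * Kr ((i:ℝ)+1) ((j:ℝ)+1))) :=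
            tsum_mul_left.symm
    have hsR : Summable (fun j : ℕ => lam/2 * (((1 + ((i:ℝ)+1)^2 + Z^2) ^ (s/2) * ‖φ (i+1)‖)^2/((i:ℝ)+1) ^ (-(1/2):ℝ)) * (Kp t ((i:ℝ)+1) ((j:ℝ)+1) * ((j:ℝ)+1) ^ (-(1/2):ℝ)) + 1/(2*lam) * (((1 + ((j:ℝ)+1)^2 + Z^2) ^ (s/2) * ‖c (j+1)‖)^2/((j:ℝ)+1) ^ (-(1/2):ℝ)) * (Kp t ((i:ℝ)+1) ((j:ℝ)+1) * ((i:ℝ)+1) ^ (-(1/2):ℝ))) :=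
      (hG1sum i).add (hG2sum i)
    have hsL : Summable (fun j : ℕ =>
        ((1 + ((i:ℝ)+1)^2 + Z^2) ^ (s/2) * ‖φ (i+1)‖) * ((1 + ((i:ℝ)+1)^2 + Z^2) ^ (s/2) * (‖c (j+1)‖ * Kr ((i:ℝ)+1) ((j:ℝ)+1)))) := by
      apply Summable.of_nonneg_of_le _ (hterm i) hsR
      intro j
      have hi1 : (1:ℝ) ≤ (i:ℝ)+1 := one_le_cast_succ i
      have hj1 : (1:ℝ) ≤ (j:ℝ)+1 := one_le_cast_succ j
      exact mul_nonneg (hx0 i) (mul_nonneg (hv i).le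
        (mul_nonneg (norm_nonneg _) (Kr_nonneg hi1 hj1)))
    have h2 := Summable.tsum_le_tsum (hterm i) hsL hsR
    rw [Summable.tsum_add (hG1sum i) (hG2sum i)] at h2
    linarith [h1, h2]
  -- row sums
  have htsum1 : ∀ i : ℕ, (∑' j : ℕ, lam/2 * (((1 + ((i:ℝ)+1)^2 + Z^2) ^ (s/2) * ‖φ (i+1)‖)^2/((i:ℝ)+1) ^ (-(1/2):ℝ)) * (Kp t ((i:ℝ)+1) ((j:ℝ)+1) * ((j:ℝ)+1) ^ (-(1/2):ℝ))) ≤ 1/2 * ((1 + ((i:ℝ)+1)^2 + Z^2) ^ (s/2) * ‖φ (i+1)‖)^2 := by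
    intro i
    rw [tsum_mul_left]
    have hrow := (row_bound ht0 ht i).2
    have hhne : (((i:ℝ)+1) ^ (-(1/2):ℝ)) ≠ 0 := (hhpos i).ne'
    calc lam/2 * (((1 + ((i:ℝ)+1)^2 + Z^2) ^ (s/2) * ‖φ (i+1)‖)^2/((i:ℝ)+1) ^ (-(1/2):ℝ))
          * ∑' j : ℕ, (Kp t ((i:ℝ)+1) ((j:ℝ)+1) * ((j:ℝ)+1) ^ (-(1/2):ℝ))
        ≤ lam/2 * (((1 + ((i:ℝ)+1)^2 + Z^2) ^ (s/2) * ‖φ (i+1)‖)^2/((i:ℝ)+1) ^ (-(1/2):ℝ)) * (AAc t * ((i:ℝ)+1) ^ (-(1/2):ℝ)) := by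
          apply mul_le_mul_of_nonneg_left hrow
          positivity
      _ = 1/2 * ((1 + ((i:ℝ)+1)^2 + Z^2) ^ (s/2) * ‖φ (i+1)‖)^2 := by
          rw [hlam]; field_simp
  -- column sums over a finite set
  have htsum2 : ∀ F : Finset ℕ, (∑ i ∈ F, ∑' j : ℕ, 1/(2*lam) * (((1 + ((j:ℝ)+1)^2 + Z^2) ^ (s/2) * ‖c (j+1)‖)^2/((j:ℝ)+1) ^ (-(1/2):ℝ)) * (Kp t ((i:ℝ)+1) ((j:ℝ)+1) * ((i:ℝ)+1) ^ (-(1/2):ℝ)))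
      ≤ AAc t^2/2 * ∑' j : ℕ, ((1 + ((j:ℝ)+1)^2 + Z^2) ^ (s/2) * ‖c (j+1)‖)^2 := by
    intro F
    have e := Summable.tsum_finsetSum (f := fun (i j : ℕ) => 1/(2*lam) * (((1 + ((j:ℝ)+1)^2 + Z^2) ^ (s/2) * ‖c (j+1)‖)^2/((j:ℝ)+1) ^ (-(1/2):ℝ)) * (Kp t ((i:ℝ)+1) ((j:ℝ)+1) * ((i:ℝ)+1) ^ (-(1/2):ℝ))) (s := F)
      (fun i _ => hG2sum i)
    have hle : ∀ j : ℕ, (∑ i ∈ F, 1/(2*lam) * (((1 + ((j:ℝ)+1)^2 + Z^2) ^ (s/2) * ‖c (j+1)‖)^2/((j:ℝ)+1) ^ (-(1/2):ℝ)) * (Kp t ((i:ℝ)+1) ((j:ℝ)+1) * ((i:ℝ)+1) ^ (-(1/2):ℝ))) ≤ AAc t^2/2 * ((1 + ((j:ℝ)+1)^2 + Z^2) ^ (s/2) * ‖c (j+1)‖)^2 := by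
      intro j
      have hj1 : (1:ℝ) ≤ (j:ℝ)+1 := one_le_cast_succ j
      have hhne : (((j:ℝ)+1) ^ (-(1/2):ℝ)) ≠ 0 := (hhpos j).ne'
      have hcol := col_bound ht0 ht j
      have hsumcol : (∑ i ∈ F, (Kp t ((i:ℝ)+1) ((j:ℝ)+1) * ((i:ℝ)+1) ^ (-(1/2):ℝ))) ≤ AAc t * ((j:ℝ)+1) ^ (-(1/2):ℝ) := by
        refine le_trans (Summable.sum_le_tsum F (fun i _ => ?_) hcol.1) hcol.2
        exact mul_nonneg (Kp_nonneg (one_le_cast_succ i) hj1) (hhpos i).le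
      calc (∑ i ∈ F, 1/(2*lam) * (((1 + ((j:ℝ)+1)^2 + Z^2) ^ (s/2) * ‖c (j+1)‖)^2/((j:ℝ)+1) ^ (-(1/2):ℝ)) * (Kp t ((i:ℝ)+1) ((j:ℝ)+1) * ((i:ℝ)+1) ^ (-(1/2):ℝ)))
          = 1/(2*lam) * (((1 + ((j:ℝ)+1)^2 + Z^2) ^ (s/2) * ‖c (j+1)‖)^2/((j:ℝ)+1) ^ (-(1/2):ℝ))
            * ∑ i ∈ F, (Kp t ((i:ℝ)+1) ((j:ℝ)+1) * ((i:ℝ)+1) ^ (-(1/2):ℝ)) := by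
            rw [Finset.mul_sum]
        _ ≤ 1/(2*lam) * (((1 + ((j:ℝ)+1)^2 + Z^2) ^ (s/2) * ‖c (j+1)‖)^2/((j:ℝ)+1) ^ (-(1/2):ℝ)) * (AAc t * ((j:ℝ)+1) ^ (-(1/2):ℝ)) := by
            apply mul_le_mul_of_nonneg_left hsumcol
            positivity
        _ = AAc t^2/2 * ((1 + ((j:ℝ)+1)^2 + Z^2) ^ (s/2) * ‖c (j+1)‖)^2 := by
            rw [hlam]; field_simp
    have hsL : Summable (fun j : ℕ => ∑ i ∈ F, 1/(2*lam) * (((1 + ((j:ℝ)+1)^2 + Z^2) ^ (s/2) * ‖c (j+1)‖)^2/((j:ℝ)+1) ^ (-(1/2):ℝ)) * (Kp t ((i:ℝ)+1) ((j:ℝ)+1) * ((i:ℝ)+1) ^ (-(1/2):ℝ))) :=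
      summable_sum (fun i _ => hG2sum i)
    exact (le_of_eq e.symm).trans
      ((Summable.tsum_le_tsum hle hsL (hsumy.mul_left _)).trans (le_of_eq tsum_mul_left))
  -- finite-set bound and conclusion
  have hfin : ∀ F : Finset ℕ, (∑ i ∈ F, ((1 + ((i:ℝ)+1)^2 + Z^2) ^ (s/2) * ‖φ (i+1)‖)^2) ≤ AAc t^2 * ∑' j : ℕ, ((1 + ((j:ℝ)+1)^2 + Z^2) ^ (s/2) * ‖c (j+1)‖)^2 := by
    intro F
    have h1 : (∑ i ∈ F, ((1 + ((i:ℝ)+1)^2 + Z^2) ^ (s/2) * ‖φ (i+1)‖)^2)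
        ≤ ∑ i ∈ F, ((∑' j : ℕ, lam/2 * (((1 + ((i:ℝ)+1)^2 + Z^2) ^ (s/2) * ‖φ (i+1)‖)^2/((i:ℝ)+1) ^ (-(1/2):ℝ)) * (Kp t ((i:ℝ)+1) ((j:ℝ)+1) * ((j:ℝ)+1) ^ (-(1/2):ℝ))) + (∑' j : ℕ, 1/(2*lam) * (((1 + ((j:ℝ)+1)^2 + Z^2) ^ (s/2) * ‖c (j+1)‖)^2/((j:ℝ)+1) ^ (-(1/2):ℝ)) * (Kp t ((i:ℝ)+1) ((j:ℝ)+1) * ((i:ℝ)+1) ^ (-(1/2):ℝ)))) :=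
      Finset.sum_le_sum (fun i _ => hkey i)
    rw [Finset.sum_add_distrib] at h1
    have h2 : (∑ i ∈ F, ∑' j : ℕ, lam/2 * (((1 + ((i:ℝ)+1)^2 + Z^2) ^ (s/2) * ‖φ (i+1)‖)^2/((i:ℝ)+1) ^ (-(1/2):ℝ)) * (Kp t ((i:ℝ)+1) ((j:ℝ)+1) * ((j:ℝ)+1) ^ (-(1/2):ℝ))) ≤ ∑ i ∈ F, (1/2 * ((1 + ((i:ℝ)+1)^2 + Z^2) ^ (s/2) * ‖φ (i+1)‖)^2) :=
      Finset.sum_le_sum (fun i _ => htsum1 i)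
    rw [← Finset.mul_sum] at h2
    have h3 := htsum2 F
    linarith [h1, h2, h3]
  have hxsummable : Summable (fun i : ℕ => ((1 + ((i:ℝ)+1)^2 + Z^2) ^ (s/2) * ‖φ (i+1)‖)^2) :=
    summable_of_sum_le (fun i => sq_nonneg _) hfin
  exact Summable.tsum_le_of_sum_le hxsummable hfin
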